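/- Let P ⊂ ℝ³ be a plane through the origin, with the Gaussian weight e^{−|x|²/4}. Then for all sufficiently large R > 0, ∫_{P \ B_R(0)} e^{−|x|²/4} dμ − ½ ∫_{P ∩ B_R(0)} e^{−|x|²/4} dμ < 0. Consequently, for such R the Lipschitz function φ_R which equals 1 on B_R(0), equals 0 outside B_{R+1}(0), and is linear in |x| on B_{R+1}(0) \ B_R(0), satisfies ∫_P (|∇φ_R|² − ½ φ_R²) e^{−|x|²/4} dμ < 0; in particular the plane P is not L-stable. -/

import Mathlib

open MeasureTheory Filter Metric

noncomputable section

/-- Euclidean space `ℝⁿ`. -/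
abbrev Euc (n : ℕ) : Type := EuclideanSpace ℝ (Fin n)

/-- The radial cutoff `φ_R`: equal to `1` on `B_R(0)`, `0` outside `B_{R+1}(0)`,
and linear in `|x|` in between. -/
def radialCutoff (R : ℝ) (y : Euc 2) : ℝ := min 1 (max 0 (R + 1 - ‖y‖))

lemma gauss_integrable : Integrable (fun y : Euc 2 => Real.exp (-‖y‖ ^ 2 / 4)) := by
  have h := (GaussianFourier.integrable_cexp_neg_mul_sq_norm_add (V := Euc 2)
    (b := (1/4 : ℂ)) (by norm_num) 0 0).re
  refine h.congr (Eventually.of_forall fun y => ?_)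
  simp only [zero_mul, add_zero]
  rw [show (-(1/4 : ℂ) * (‖y‖ : ℂ) ^ 2) = ((-‖y‖ ^ 2 / 4 : ℝ) : ℂ) by push_cast; ring]
  exact Complex.exp_ofReal_re _

lemma radialCutoff_lipschitz (R : ℝ) : LipschitzWith 1 (radialCutoff R) := by
  have h1 : LipschitzWith 1 (fun t : ℝ => R + 1 - t) :=
    LipschitzWith.of_dist_le_mul fun x y => by
      simp only [Real.dist_eq, NNReal.coe_one, one_mul]
      rw [show (R + 1 - x) - (R + 1 - y) = y - x by ring, abs_sub_comm]
  have := ((h1.const_max 0).const_min 1).comp lipschitzWith_one_norm (α := Euc 2)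
  show LipschitzWith 1 (fun y : Euc 2 => min 1 (max 0 (R + 1 - ‖y‖)))
  simpa [radialCutoff, Function.comp_def] using this

lemma radialCutoff_nonneg (R : ℝ) (y : Euc 2) : 0 ≤ radialCutoff R y :=
  le_min zero_le_one (le_max_left _ _)

lemma radialCutoff_le_one (R : ℝ) (y : Euc 2) : radialCutoff R y ≤ 1 := min_le_left _ _

lemma radialCutoff_eq_one {R : ℝ} {y : Euc 2} (h : ‖y‖ < R) : radialCutoff R y = 1 := by
  have : (1:ℝ) ≤ max 0 (R + 1 - ‖y‖) := le_max_of_le_right (by linarith)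
  simp [radialCutoff, min_eq_left this]

lemma radialCutoff_eq_zero {R : ℝ} {y : Euc 2} (h : R + 1 ≤ ‖y‖) : radialCutoff R y = 0 := by
  have : max 0 (R + 1 - ‖y‖) = 0 := max_eq_left (by linarith)
  simp [radialCutoff, this]

lemma norm_gradient_eq (f : Euc 2 → ℝ) (y : Euc 2) :
    ‖gradient f y‖ = ‖fderiv ℝ f y‖ := by
  rw [gradient, LinearIsometryEquiv.norm_map]

lemma gradient_radialCutoff_norm_le (R : ℝ) (y : Euc 2) :
    ‖gradient (radialCutoff R) y‖ ≤ 1 := by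
  rw [norm_gradient_eq]
  simpa using norm_fderiv_le_of_lipschitz ℝ (radialCutoff_lipschitz R) (x₀ := y)

lemma gradient_radialCutoff_ball {R : ℝ} {y : Euc 2} (h : ‖y‖ < R) :
    gradient (radialCutoff R) y = 0 := by
  have hEq : radialCutoff R =ᶠ[nhds y] fun _ => (1:ℝ) := by
    filter_upwards [Metric.isOpen_ball.mem_nhds (by simpa [mem_ball_zero_iff] using h :
      y ∈ Metric.ball (0 : Euc 2) R)] with z hz
    exact radialCutoff_eq_one (mem_ball_zero_iff.mp hz)
  rw [gradient, hEq.fderiv_eq, fderiv_fun_const]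
  simp

lemma gradient_measurable (f : Euc 2 → ℝ) : Measurable (gradient f) := by
  exact (LinearIsometryEquiv.continuous _).measurable.comp (measurable_fderiv ℝ f)

lemma gauss_pos : 0 < ∫ y : Euc 2, Real.exp (-‖y‖ ^ 2 / 4) := by
  rw [integral_pos_iff_support_of_nonneg (fun y => (Real.exp_pos _).le) gauss_integrable]
  have hsupp : Function.support (fun y : Euc 2 => Real.exp (-‖y‖ ^ 2 / 4)) = Set.univ := by
    ext y; simp [Function.mem_support, (Real.exp_pos _).ne']
  rw [hsupp]
  exact isOpen_univ.measure_pos volume ⟨0, trivial⟩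

lemma energy_aesm (R : ℝ) : AEStronglyMeasurable (fun y : Euc 2 =>
    (‖gradient (radialCutoff R) y‖ ^ 2 - (1 / 2) * (radialCutoff R y) ^ 2) *
      Real.exp (-‖y‖ ^ 2 / 4)) volume := by
  refine Measurable.aestronglyMeasurable ?_
  exact ((((gradient_measurable _).norm.pow_const 2).sub
    ((((radialCutoff_lipschitz R).continuous.measurable).pow_const 2).const_mul _)).mul
    (Real.continuous_exp.comp ((continuous_norm.pow 2).neg.div_const 4)).measurable)

lemma energy_integrable (R : ℝ) : Integrable (fun y : Euc 2 =>
    (‖gradient (radialCutoff R) y‖ ^ 2 - (1 / 2) * (radialCutoff R y) ^ 2) *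
      Real.exp (-‖y‖ ^ 2 / 4)) := by
  refine (gauss_integrable.const_mul (3/2)).mono (energy_aesm R)
    (Eventually.of_forall fun y => ?_)
  have h1 := gradient_radialCutoff_norm_le R y
  have h0 : (0:ℝ) ≤ ‖gradient (radialCutoff R) y‖ := norm_nonneg _
  have h2 := radialCutoff_nonneg R y
  have h3 := radialCutoff_le_one R y
  have hw := Real.exp_pos (-‖y‖ ^ 2 / 4)
  rw [Real.norm_eq_abs, Real.norm_eq_abs, abs_mul, abs_mul, abs_of_pos hw]
  have habs : |‖gradient (radialCutoff R) y‖ ^ 2 - 1 / 2 * radialCutoff R y ^ 2| ≤ |(3:ℝ)/2| := by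
    rw [abs_of_pos (by norm_num : (0:ℝ) < 3/2)]
    rw [abs_le]
    constructor <;> nlinarith
  exact mul_le_mul_of_nonneg_right habs hw.le

/-- **The plane is not L-stable (final step of Section 4.4).**  Let `P ⊆ ℝ³` be a plane
through the origin (identified with `ℝ²` via an isometry), with Gaussian weight
`e^{-|x|²/4}`.  For all sufficiently large `R > 0`,
`∫_{P \ B_R} e^{-|x|²/4} - ½ ∫_{P ∩ B_R} e^{-|x|²/4} < 0`; consequently, for such `R`
the cutoff `φ_R` satisfies `∫_P (|∇φ_R|² - ½ φ_R²) e^{-|x|²/4} < 0`, and in particular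
the plane `P` is not L-stable. -/
theorem plane_is_not_L_stable :
    (∀ᶠ R in atTop,
      (∫ y in {y : Euc 2 | R ≤ ‖y‖}, Real.exp (-‖y‖ ^ 2 / 4)) -
          (1 / 2) * ∫ y in Metric.ball (0 : Euc 2) R, Real.exp (-‖y‖ ^ 2 / 4) < 0 ∧
      (∫ y : Euc 2, (‖gradient (radialCutoff R) y‖ ^ 2 -
          (1 / 2) * (radialCutoff R y) ^ 2) * Real.exp (-‖y‖ ^ 2 / 4)) < 0) ∧
    ¬ (∀ φ : Euc 2 → ℝ, (∃ L : NNReal, LipschitzWith L φ) → HasCompactSupport φ →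
        0 ≤ ∫ y : Euc 2, (‖gradient φ y‖ ^ 2 - (1 / 2) * (φ y) ^ 2) *
          Real.exp (-‖y‖ ^ 2 / 4)) := by
  have hC := gauss_pos
  set C : ℝ := ∫ y : Euc 2, Real.exp (-‖y‖ ^ 2 / 4) with hCdef
  have htend : Tendsto (fun n : ℕ => ∫ y in Metric.ball (0 : Euc 2) (n : ℝ),
      Real.exp (-‖y‖ ^ 2 / 4)) atTop (nhds C) := by
    have hU : (⋃ n : ℕ, Metric.ball (0 : Euc 2) (n : ℝ)) = Set.univ := by
      ext x
      simp only [Set.mem_iUnion, mem_ball_zero_iff, Set.mem_univ, iff_true]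
      exact exists_nat_gt ‖x‖
    have h := tendsto_setIntegral_of_monotone (μ := (volume : Measure (Euc 2)))
      (s := fun n : ℕ => Metric.ball (0 : Euc 2) (n : ℝ))
      (f := fun y => Real.exp (-‖y‖ ^ 2 / 4))
      (fun _ => measurableSet_ball)
      (fun m n hmn => Metric.ball_subset_ball (by exact_mod_cast hmn))
      (by rw [hU]; exact gauss_integrable.integrableOn)
    rwa [hU, Measure.restrict_univ] at h
  obtain ⟨N, hN⟩ : ∃ n : ℕ, (3/4) * C < ∫ y in Metric.ball (0 : Euc 2) (n : ℝ),
      Real.exp (-‖y‖ ^ 2 / 4) :=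
    (htend.eventually (eventually_gt_nhds (by linarith))).exists
  have hEv : ∀ᶠ R in atTop,
      (∫ y in {y : Euc 2 | R ≤ ‖y‖}, Real.exp (-‖y‖ ^ 2 / 4)) -
          (1 / 2) * ∫ y in Metric.ball (0 : Euc 2) R, Real.exp (-‖y‖ ^ 2 / 4) < 0 ∧
      (∫ y : Euc 2, (‖gradient (radialCutoff R) y‖ ^ 2 -
          (1 / 2) * (radialCutoff R y) ^ 2) * Real.exp (-‖y‖ ^ 2 / 4)) < 0 := by
    filter_upwards [eventually_ge_atTop (N : ℝ)] with R hR
    have hs : MeasurableSet (Metric.ball (0 : Euc 2) R) := measurableSet_ball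
    have hset : {y : Euc 2 | R ≤ ‖y‖} = (Metric.ball (0 : Euc 2) R)ᶜ := by
      ext y; simp [mem_ball_zero_iff, not_lt]
    have hgR : (3/4) * C < ∫ y in Metric.ball (0 : Euc 2) R, Real.exp (-‖y‖ ^ 2 / 4) :=
      lt_of_lt_of_le hN (setIntegral_mono_set gauss_integrable.integrableOn
        (Eventually.of_forall fun y => (Real.exp_pos _).le)
        (HasSubset.Subset.eventuallyLE (Metric.ball_subset_ball hR)))
    have hsplit : (∫ y in Metric.ball (0 : Euc 2) R, Real.exp (-‖y‖ ^ 2 / 4)) +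
        (∫ y in (Metric.ball (0 : Euc 2) R)ᶜ, Real.exp (-‖y‖ ^ 2 / 4)) = C :=
      integral_add_compl hs gauss_integrable
    have h1 : (∫ y in {y : Euc 2 | R ≤ ‖y‖}, Real.exp (-‖y‖ ^ 2 / 4)) -
        (1 / 2) * ∫ y in Metric.ball (0 : Euc 2) R, Real.exp (-‖y‖ ^ 2 / 4) < 0 := by
      rw [hset]; linarith
    refine ⟨h1, ?_⟩
    have hind1 : Integrable ((Metric.ball (0 : Euc 2) R)ᶜ.indicator
        fun y => Real.exp (-‖y‖ ^ 2 / 4)) := gauss_integrable.indicator hs.compl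
    have hind2 : Integrable ((Metric.ball (0 : Euc 2) R).indicator
        fun y => Real.exp (-‖y‖ ^ 2 / 4)) := gauss_integrable.indicator hs
    have hInth : Integrable (fun y : Euc 2 =>
        (Metric.ball (0 : Euc 2) R)ᶜ.indicator (fun y => Real.exp (-‖y‖ ^ 2 / 4)) y -
        (1/2) * (Metric.ball (0 : Euc 2) R).indicator (fun y => Real.exp (-‖y‖ ^ 2 / 4)) y) :=
      hind1.sub (hind2.const_mul _)
    have hpt : ∀ y : Euc 2, (‖gradient (radialCutoff R) y‖ ^ 2 -
        (1 / 2) * (radialCutoff R y) ^ 2) * Real.exp (-‖y‖ ^ 2 / 4) ≤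
        (Metric.ball (0 : Euc 2) R)ᶜ.indicator (fun y => Real.exp (-‖y‖ ^ 2 / 4)) y -
        (1/2) * (Metric.ball (0 : Euc 2) R).indicator (fun y => Real.exp (-‖y‖ ^ 2 / 4)) y := by
      intro y
      by_cases hy : ‖y‖ < R
      · have hyb : y ∈ Metric.ball (0 : Euc 2) R := mem_ball_zero_iff.mpr hy
        rw [gradient_radialCutoff_ball hy, radialCutoff_eq_one hy,
          Set.indicator_of_mem hyb, Set.indicator_of_notMem (by simpa using hyb)]
        simp
      · have hyb : y ∉ Metric.ball (0 : Euc 2) R := by simpa [mem_ball_zero_iff] using hy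
        rw [Set.indicator_of_notMem hyb, Set.indicator_of_mem (Set.mem_compl hyb)]
        have h1 := gradient_radialCutoff_norm_le R y
        have h0 : (0:ℝ) ≤ ‖gradient (radialCutoff R) y‖ := norm_nonneg _
        have h2 := radialCutoff_nonneg R y
        have hw := Real.exp_pos (-‖y‖ ^ 2 / 4)
        have key : (‖gradient (radialCutoff R) y‖ ^ 2 - (1 / 2) * (radialCutoff R y) ^ 2) *
            Real.exp (-‖y‖ ^ 2 / 4) ≤ 1 * Real.exp (-‖y‖ ^ 2 / 4) :=
          mul_le_mul_of_nonneg_right (by nlinarith) hw.le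
        nlinarith
    have hle := integral_mono (energy_integrable R) hInth hpt
    have heq : (∫ y : Euc 2,
        ((Metric.ball (0 : Euc 2) R)ᶜ.indicator (fun y => Real.exp (-‖y‖ ^ 2 / 4)) y -
        (1/2) * (Metric.ball (0 : Euc 2) R).indicator (fun y => Real.exp (-‖y‖ ^ 2 / 4)) y)) =
        (∫ y in (Metric.ball (0 : Euc 2) R)ᶜ, Real.exp (-‖y‖ ^ 2 / 4)) -
        (1/2) * ∫ y in Metric.ball (0 : Euc 2) R, Real.exp (-‖y‖ ^ 2 / 4) := by
      rw [integral_sub hind1 (hind2.const_mul _), integral_const_mul,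
        integral_indicator hs.compl, integral_indicator hs]
    rw [heq] at hle
    rw [hset] at h1
    linarith
  refine ⟨hEv, fun hstab => ?_⟩
  obtain ⟨R, _, h2⟩ := hEv.exists
  have hsupp : HasCompactSupport (radialCutoff R) := by
    refine HasCompactSupport.intro (isCompact_closedBall (0 : Euc 2) (R + 1)) (fun x hx => ?_)
    refine radialCutoff_eq_zero (le_of_lt ?_)
    simpa [mem_closedBall_zero_iff, not_le] using hx
  exact absurd (hstab _ ⟨1, radialCutoff_lipschitz R⟩ hsupp) (not_le.mpr h2)
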